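/- For every integer m ≥ 0 and any real (or integer) x, x^m = Σ_{k=1}^{m+1} S(m+1, k) · (x−1)(x−2)···(x−(k−1)), where the product is the falling factorial (x−1)_{k−1} (empty product equal to 1 for k = 1), and S denotes the Stirling number of the second kind. -/

import Mathlib

/-- Stirling numbers of the second kind: `stirling ℓ k` is the number of partitions of an
`ℓ`-element set into `k` nonempty blocks. -/
def stirling : ℕ → ℕ → ℕ
  | 0, 0 => 1
  | 0, _ + 1 => 0
  | _ + 1, 0 => 0
  | l + 1, k + 1 => (k + 1) * stirling l (k + 1) + stirling l k

lemma stirling_eq_zero : ∀ n k : ℕ, stirling n (n + k + 1) = 0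
  | 0, _ => rfl
  | n + 1, k => by
    rw [show n + 1 + k + 1 = (n + k + 1) + 1 from by omega]
    simp only [stirling]
    rw [show n + k + 1 + 1 = n + (k + 1) + 1 from rfl, stirling_eq_zero n (k + 1),
      stirling_eq_zero n k]
    simp

theorem stmt_5 (m : ℕ) (x : ℝ) :
    x ^ m =
      ∑ k ∈ Finset.Icc 1 (m + 1),
        (stirling (m + 1) k : ℝ) * ∏ i ∈ Finset.range (k - 1), (x - 1 - i) := by
  have reidx : ∀ (n : ℕ) (f : ℕ → ℝ),
      ∑ k ∈ Finset.Icc 1 (n + 1), f k = ∑ j ∈ Finset.range (n + 1), f (j + 1) := by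
    intro n f
    rw [← Finset.Ico_add_one_right_eq_Icc, Finset.sum_Ico_eq_sum_range]
    simp [Nat.add_comm]
  induction m generalizing x with
  | zero =>
    norm_num [Finset.Icc_self]
    norm_num [stirling]
  | succ m ih =>
    rw [reidx]
    simp only [Nat.add_sub_cancel]
    have ih' : x ^ m = ∑ j ∈ Finset.range (m + 1),
        (stirling (m + 1) (j + 1) : ℝ) * ∏ i ∈ Finset.range j, (x - 1 - i) := by
      rw [ih x, reidx]
      simp
    have step : ∀ j : ℕ, (stirling (m + 2) (j + 1) : ℝ)
        = (j + 1) * stirling (m + 1) (j + 1) + stirling (m + 1) j := by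
      intro j
      simp only [stirling]
      push_cast
      ring
    calc x ^ (m + 1) = x * x ^ m := by ring
    _ = ∑ j ∈ Finset.range (m + 1),
        (stirling (m + 1) (j + 1) : ℝ) * (∏ i ∈ Finset.range j, (x - 1 - i)) * x := by
      rw [ih', Finset.mul_sum]; apply Finset.sum_congr rfl; intro j _; ring
    _ = ∑ j ∈ Finset.range (m + 1),
        ((j + 1 : ℝ) * stirling (m + 1) (j + 1) * ∏ i ∈ Finset.range j, (x - 1 - i)
          + (stirling (m + 1) (j + 1) : ℝ) * ∏ i ∈ Finset.range (j + 1), (x - 1 - i)) := by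
      apply Finset.sum_congr rfl; intro j _
      rw [Finset.prod_range_succ]
      ring
    _ = ∑ j ∈ Finset.range (m + 2),
        (stirling (m + 2) (j + 1) : ℝ) * ∏ i ∈ Finset.range j, (x - 1 - i) := by
      rw [Finset.sum_add_distrib]
      have h1 : ∑ j ∈ Finset.range (m + 1),
          (j + 1 : ℝ) * stirling (m + 1) (j + 1) * ∏ i ∈ Finset.range j, (x - 1 - i)
          = ∑ j ∈ Finset.range (m + 2),
          (j + 1 : ℝ) * stirling (m + 1) (j + 1) * ∏ i ∈ Finset.range j, (x - 1 - i) := by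
        conv_rhs => rw [Finset.sum_range_succ]
        simp [show stirling (m + 1) (m + 1 + 1) = 0 from stirling_eq_zero (m + 1) 0]
      have h2 : ∑ j ∈ Finset.range (m + 1),
          (stirling (m + 1) (j + 1) : ℝ) * ∏ i ∈ Finset.range (j + 1), (x - 1 - i)
          = ∑ j ∈ Finset.range (m + 2),
          (stirling (m + 1) j : ℝ) * ∏ i ∈ Finset.range j, (x - 1 - i) := by
        rw [Finset.sum_range_succ' (fun j => (stirling (m + 1) j : ℝ)
          * ∏ i ∈ Finset.range j, (x - 1 - i)) (m + 1)]
        simp [stirling]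
      rw [h1, h2, ← Finset.sum_add_distrib]
      apply Finset.sum_congr rfl; intro j _
      rw [step j]
      ring
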